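/- Lower bound for the transition cost on the whole line: Let V : ℝ → ℝ be continuous with V(s) ≥ 0 for all s. Let u : ℝ → ℝ be continuously differentiable with u(x) → −1 as x → −∞ and u(x) → 1 as x → +∞, and suppose the function x ↦ (1/2)·(u'(x))² + V(u(x)) is integrable on ℝ. Then ∫_ℝ ( (1/2)·(u'(x))² + V(u(x)) ) dx ≥ ∫_{-1}^{1} √(2·V(s)) ds. -/

import Mathlib

open MeasureTheory Filter

/-- Lower bound for the transition cost on the whole line: if `u` is `C¹`, connects `−1` at `−∞`
to `1` at `+∞`, and its energy density is integrable, then its total energy is at least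
`∫_{-1}^{1} √(2 V(s)) ds`. -/
theorem whole_line_transition_lower_bound
    (V : ℝ → ℝ) (hVc : Continuous V) (hV0 : ∀ s, 0 ≤ V s)
    (u : ℝ → ℝ) (hu : ContDiff ℝ 1 u)
    (hbot : Tendsto u atBot (nhds (-1)))
    (htop : Tendsto u atTop (nhds 1))
    (hint : Integrable (fun x => (1/2) * (deriv u x)^2 + V (u x))) :
    (∫ s in (-1:ℝ)..1, Real.sqrt (2 * V s)) ≤
      ∫ x : ℝ, ((1/2) * (deriv u x)^2 + V (u x)) := by
  set g : ℝ → ℝ := fun s => Real.sqrt (2 * V s) with hg_def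
  have hgc : Continuous g := (continuous_const.mul hVc).sqrt
  set e : ℝ → ℝ := fun x => (1/2) * (deriv u x)^2 + V (u x) with he_def
  have hderiv_c : Continuous (deriv u) := hu.continuous_deriv le_rfl
  have hec : Continuous e :=
    (continuous_const.mul (hderiv_c.pow 2)).add (hVc.comp hu.continuous)
  have he0 : ∀ x, 0 ≤ e x := fun x =>
    add_nonneg (mul_nonneg (by norm_num) (sq_nonneg _)) (hV0 _)
  set C : ℝ := ∫ x : ℝ, e x with hC_def
  have hderiv : ∀ x, HasDerivAt u (deriv u x) x := fun x =>
    ((hu.differentiable one_ne_zero) x).hasDerivAt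
  -- pointwise AM-GM bound
  have hpt : ∀ x, deriv u x * g (u x) ≤ e x := by
    intro x
    have hsq : g (u x) ^ 2 = 2 * V (u x) :=
      Real.sq_sqrt (mul_nonneg (by norm_num) (hV0 _))
    show deriv u x * g (u x) ≤ 1/2 * (deriv u x)^2 + V (u x)
    nlinarith [two_mul_le_add_sq (deriv u x) (g (u x)), sq_nonneg (deriv u x - g (u x)),
      sq_nonneg (deriv u x + g (u x))]
  -- key finite-interval estimate
  have key : ∀ a b : ℝ, a ≤ b → (∫ s in u a..u b, g s) ≤ C := by
    intro a b hab
    have hcv : (∫ x in a..b, deriv u x • g (u x)) = ∫ s in u a..u b, g s := by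
      have := intervalIntegral.integral_comp_smul_deriv
        (f := u) (f' := deriv u) (g := g) (a := a) (b := b)
        (fun x _ => hderiv x) (hderiv_c.continuousOn) hgc
      simpa using this
    have h1 : (∫ s in u a..u b, g s) ≤ ∫ x in a..b, e x := by
      rw [← hcv]
      apply intervalIntegral.integral_mono_on hab
      · exact ((hderiv_c.smul (hgc.comp hu.continuous)).intervalIntegrable a b)
      · exact hec.intervalIntegrable a b
      · intro x _
        simpa using hpt x
    have h2 : (∫ x in a..b, e x) ≤ C := by
      rw [intervalIntegral.integral_of_le hab]
      exact setIntegral_le_integral hint (Filter.Eventually.of_forall he0)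
    exact h1.trans h2
  -- primitive of g
  set G : ℝ → ℝ := fun t => ∫ s in (0:ℝ)..t, g s with hG_def
  have hGc : Continuous G :=
    intervalIntegral.continuous_primitive (fun a b => hgc.intervalIntegrable a b) 0
  have hGsub : ∀ a b : ℝ, (∫ s in a..b, g s) = G b - G a := by
    intro a b
    rw [hG_def]
    simp only
    rw [← intervalIntegral.integral_interval_sub_left
      (hgc.intervalIntegrable 0 b) (hgc.intervalIntegrable 0 a)]
  have htend : Tendsto (fun n : ℝ => G (u n) - G (u (-n))) atTop
      (nhds (G 1 - G (-1))) := by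
    have h1 : Tendsto (fun n : ℝ => G (u n)) atTop (nhds (G 1)) :=
      ((hGc.tendsto 1).comp htop)
    have h2 : Tendsto (fun n : ℝ => G (u (-n))) atTop (nhds (G (-1))) :=
      ((hGc.tendsto (-1)).comp (hbot.comp tendsto_neg_atTop_atBot))
    exact h1.sub h2
  have hle : G 1 - G (-1) ≤ C := by
    refine le_of_tendsto htend ?_
    filter_upwards [eventually_ge_atTop (0:ℝ)] with n hn
    have := key (-n) n (by linarith)
    rwa [hGsub] at this
  calc (∫ s in (-1:ℝ)..1, g s) = G 1 - G (-1) := hGsub (-1) 1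
    _ ≤ C := hle
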